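/- Let G > 0, λ = 0 and μ + G = G/2 > 0 (the Willmore Hopf case). Then for any real ν the cubic resolvent P̃₃(s) = s³ + 8(μ+G)s² + 16((μ+G)² - ν)s cannot have three nonnegative real roots unless it has a multiple root; consequently there are no orbitlike elastic curves corresponding to Willmore Hopf tori. -/
import Mathlib


theorem no_orbitlike_willmore_hopf
    (G μ : ℝ) (hG : 0 < G) (hμ : μ + G = G/2) (ν : ℝ) :
    ¬ ∃ s₁ s₂ s₃ : ℝ, 0 ≤ s₁ ∧ 0 ≤ s₂ ∧ 0 ≤ s₃ ∧
        s₁ ≠ s₂ ∧ s₁ ≠ s₃ ∧ s₂ ≠ s₃ ∧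
        ∀ s : ℝ, s^3 + 8 * (μ + G) * s^2 + 16 * ((μ + G)^2 - ν) * s
          = (s - s₁) * (s - s₂) * (s - s₃) := by
  rintro ⟨s₁, s₂, s₃, h1, h2, h3, -, -, -, h⟩
  have e1 := h 1
  have e2 := h (-1)
  have e3 := h 2
  have e0 := h 0
  have hsum : s₁ + s₂ + s₃ = -8 * (μ + G) := by nlinarith [e1, e2, e3, e0]
  rw [hμ] at hsum
  linarith
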